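/- Let Δ be a symmetric negative definite d×d real matrix and let λ > 0. Then for every symmetric positive semidefinite d×d matrix B, tr(B²Δ) + 2λ·tr(B) ≤ −λ²·tr(Δ⁻¹), with equality if and only if B = −λΔ⁻¹. In particular, the supremum of tr(B²Δ) + 2λ·tr(B) over all symmetric positive semidefinite B equals −λ²·tr(Δ⁻¹) and is attained at the unique maximizer B = −λΔ⁻¹. -/

import Mathlib

open MeasureTheory Matrix
open scoped ENNReal NNReal RealInnerProductSpace Matrix.Norms.L2Operator

noncomputable section

def IsCoupling {α β : Type*} [MeasurableSpace α] [MeasurableSpace β]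
    (π : Measure (α × β)) (P : Measure α) (Q : Measure β) : Prop :=
  π.fst = P ∧ π.snd = Q

noncomputable def W2sq {E : Type*} [SubtractionMonoid E] [MeasurableSpace E]
    (c : E → ℝ) (P Q : Measure E) : ℝ≥0∞ :=
  ⨅ π ∈ {π : Measure (E × E) | IsCoupling π P Q},
    ∫⁻ ξ, ENNReal.ofReal ((c (ξ.1 - ξ.2)) ^ 2) ∂π

def FiniteSecondMoment {E : Type*} [NormedAddCommGroup E] [MeasurableSpace E]
    (P : Measure E) : Prop :=
  Integrable (fun x => ‖x‖ ^ 2) P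

def ambiguitySet {E : Type*} [NormedAddCommGroup E] [MeasurableSpace E]
    (c : E → ℝ) (ε : ℝ) (P : Measure E) : Set (Measure E) :=
  {Q | IsProbabilityMeasure Q ∧ FiniteSecondMoment Q ∧ W2sq c Q P ≤ ENNReal.ofReal (ε ^ 2)}

noncomputable def mulVecMap {m d : ℕ} (A : Matrix (Fin m) (Fin d) ℝ) :
    EuclideanSpace ℝ (Fin d) → EuclideanSpace ℝ (Fin m) :=
  fun x => (EuclideanSpace.equiv (Fin m) ℝ).symm (A.mulVec ((EuclideanSpace.equiv (Fin d) ℝ) x))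

noncomputable def meanVec {d : ℕ} (P : Measure (EuclideanSpace ℝ (Fin d))) :
    EuclideanSpace ℝ (Fin d) :=
  ∫ x, x ∂P

noncomputable def covMatrix {d : ℕ} (P : Measure (EuclideanSpace ℝ (Fin d))) :
    Matrix (Fin d) (Fin d) ℝ :=
  Matrix.of fun i j => ∫ x, (x i - meanVec P i) * (x j - meanVec P j) ∂P

open scoped Classical in
noncomputable def psdSqrt {d : ℕ} (M : Matrix (Fin d) (Fin d) ℝ) : Matrix (Fin d) (Fin d) ℝ :=
  if h : M.PosSemidef then
    h.1.eigenvectorUnitary.1 * diagonal (Real.sqrt ∘ h.1.eigenvalues) *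
      (star h.1.eigenvectorUnitary : Matrix (Fin d) (Fin d) ℝ)
  else 0

noncomputable def gelbrichSq {d : ℕ} (μ1 : EuclideanSpace ℝ (Fin d))
    (S1 : Matrix (Fin d) (Fin d) ℝ) (μ2 : EuclideanSpace ℝ (Fin d))
    (S2 : Matrix (Fin d) (Fin d) ℝ) : ℝ :=
  ‖μ1 - μ2‖ ^ 2 + (S1 + S2 - (2 : ℝ) • psdSqrt (psdSqrt S1 * S2 * psdSqrt S1)).trace

noncomputable def CVaR {E : Type*} [MeasurableSpace E] (γ : ℝ) (P : Measure E) (f : E → ℝ) : ℝ :=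
  ⨅ τ : ℝ, τ + (1 / γ) * ∫ x, max (f x - τ) 0 ∂P

lemma aux_trace_form {d : ℕ} {M : Matrix (Fin d) (Fin d) ℝ} (hM : M.PosDef)
    (C : Matrix (Fin d) (Fin d) ℝ) :
    0 ≤ (Cᵀ * M * C).trace ∧ ((Cᵀ * M * C).trace = 0 ↔ C = 0) := by
  have hdiag : ∀ j, (Cᵀ * M * C) j j =
      dotProduct (star (fun i => C i j)) (M *ᵥ (fun i => C i j)) := by
    intro j
    simp only [Matrix.mul_apply, Matrix.transpose_apply, Matrix.mulVec, dotProduct,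
      star_trivial, Finset.sum_mul, Finset.mul_sum]
    rw [Finset.sum_comm]
    congr 1; ext i; congr 1; ext k; ring
  have hterm : ∀ j, 0 ≤ (Cᵀ * M * C) j j := fun j => (hdiag j) ▸ hM.posSemidef.dotProduct_mulVec_nonneg _
  have htr : (Cᵀ * M * C).trace = ∑ j, (Cᵀ * M * C) j j := rfl
  constructor
  · rw [htr]; exact Finset.sum_nonneg fun j _ => hterm j
  · constructor
    · intro h
      rw [htr] at h
      have hz := (Finset.sum_eq_zero_iff_of_nonneg (fun j _ => hterm j)).mp h
      ext i j
      by_contra hne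
      have hcol : (fun i => C i j) ≠ 0 := by
        intro h0; exact hne (by simpa using congrFun h0 i)
      have := hM.dotProduct_mulVec_pos hcol
      rw [← hdiag j] at this
      exact absurd (hz j (Finset.mem_univ j)) (by simpa [Matrix.zero_apply] using this.ne')
    · intro h; simp [h]

theorem stmt7 {d : ℕ} (Δ : Matrix (Fin d) (Fin d) ℝ) (hΔ : (-Δ).PosDef)
    (lam : ℝ) (hlam : 0 < lam) :
    ∀ B : Matrix (Fin d) (Fin d) ℝ, B.PosSemidef →
      (B * B * Δ).trace + 2 * lam * B.trace ≤ -(lam ^ 2) * Δ⁻¹.trace ∧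
      ((B * B * Δ).trace + 2 * lam * B.trace = -(lam ^ 2) * Δ⁻¹.trace ↔
        B = -(lam • Δ⁻¹)) := by
  intro B hB
  classical
  have hunit : IsUnit Δ := by simpa using hΔ.isUnit.neg
  have hdet : IsUnit Δ.det := (Matrix.isUnit_iff_isUnit_det Δ).mp hunit
  have hΔsym : Δᵀ = Δ := by
    have h := hΔ.isHermitian
    rw [Matrix.IsHermitian, conjTranspose_neg] at h
    have := neg_injective h
    simpa [Matrix.conjTranspose_eq_transpose_of_trivial] using this
  have hBsym : Bᵀ = B := by
    have h := hB.isHermitian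
    simpa [Matrix.IsHermitian, Matrix.conjTranspose_eq_transpose_of_trivial] using h
  set C : Matrix (Fin d) (Fin d) ℝ := B + lam • Δ⁻¹ with hC
  have hCsym : Cᵀ = C := by
    rw [hC, transpose_add, transpose_smul, transpose_nonsing_inv, hΔsym, hBsym]
  have hmulinv : Δ * Δ⁻¹ = 1 := Matrix.mul_nonsing_inv Δ hdet
  have hinvmul : Δ⁻¹ * Δ = 1 := Matrix.nonsing_inv_mul Δ hdet
  have hexpand : C * Δ * C =
      B * Δ * B + lam • B + lam • B + (lam ^ 2) • Δ⁻¹ := by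
    rw [hC]
    rw [add_mul, add_mul, mul_add]
    simp only [smul_mul_assoc, mul_smul_comm, hinvmul, Matrix.mul_assoc, hmulinv,
      Matrix.mul_one, Matrix.one_mul, smul_smul]
    module
  have htraceC : (C * Δ * C).trace =
      (B * B * Δ).trace + 2 * lam * B.trace + lam ^ 2 * Δ⁻¹.trace := by
    rw [hexpand]
    simp only [trace_add, trace_smul, smul_eq_mul]
    rw [Matrix.trace_mul_cycle]
    ring
  have hkey := aux_trace_form hΔ C
  rw [hCsym] at hkey
  have hneg : (C * -Δ * C).trace = -(C * Δ * C).trace := by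
    simp [Matrix.mul_neg, Matrix.neg_mul]
  obtain ⟨h1, h2⟩ := hkey
  rw [hneg] at h1 h2
  constructor
  · nlinarith [htraceC]
  · constructor
    · intro heq
      have : (C * Δ * C).trace = 0 := by nlinarith [htraceC]
      have hC0 : C = 0 := h2.mp (by rw [this, neg_zero])
      rw [hC] at hC0
      exact eq_neg_of_add_eq_zero_left hC0
    · intro hBeq
      have hC0 : C = 0 := by rw [hC, hBeq]; abel
      have : (C * Δ * C).trace = 0 := by rw [hC0]; simp
      rw [this] at htraceC
      linarith [htraceC]

end
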